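/- Abstract discrete pressure-robustness: let X, Q be finite-dimensional inner product spaces, G : Q₀ → X linear (Q₀ a codimension-one subspace of Q fixed by a zero-mean condition), and let the discrete problem be a(u,v) + ⟨Gp, v⟩ = ⟨I f, v⟩ for all v ∈ X and ⟨Gq, u⟩ = 0 for all q ∈ Q₀, with a positive semidefinite and the pair well-posed. If the right-hand side interpolant satisfies the commutation I(∇ψ) = G(J ψ) for an interpolant J into Q (shifted into Q₀ by a constant), then replacing f by f + ∇ψ leaves the discrete velocity u unchanged and changes the discrete pressure by J ψ + constant. -/

import Mathlib

/-- Partial derivative in direction `i` of a scalar field on `ℝ³`. -/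
noncomputable def pd3 (i : Fin 3) (f : (Fin 3 → ℝ) → ℝ) (x : Fin 3 → ℝ) : ℝ :=
  fderiv ℝ f x (Pi.single i 1)

/-- Gradient of a scalar field on `ℝ³`. -/
noncomputable def vgrad3 (f : (Fin 3 → ℝ) → ℝ) (x : Fin 3 → ℝ) : Fin 3 → ℝ :=
  fun i => pd3 i f x

/-- Abstract discrete pressure-robustness: if the interpolants satisfy the
commutation `I(∇ψ) = G(Jψ)` and the zero-mean subspace `Q₀` can be reached by
shifting with the interpolated constant, then replacing `f` by `f + ∇ψ` leaves
the discrete velocity unchanged and changes the discrete pressure by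
`Jψ + constant`. -/
theorem discrete_pressure_robustness
    {X Q : Type*}
    [NormedAddCommGroup X] [InnerProductSpace ℝ X] [FiniteDimensional ℝ X]
    [NormedAddCommGroup Q] [InnerProductSpace ℝ Q] [FiniteDimensional ℝ Q]
    (Q₀ : Submodule ℝ Q) (G : Q →ₗ[ℝ] X)
    (a : X →ₗ[ℝ] X →ₗ[ℝ] ℝ) (hpsd : ∀ v, 0 ≤ a v v)
    (I : ((Fin 3 → ℝ) → (Fin 3 → ℝ)) → X) (J : ((Fin 3 → ℝ) → ℝ) → Q)
    (hIadd : ∀ f g, I (f + g) = I f + I g)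
    (hcomm : ∀ ψ : (Fin 3 → ℝ) → ℝ, I (fun x => vgrad3 ψ x) = G (J ψ))
    (hshift : ∀ r : Q, ∃ c : ℝ, r + c • J (fun _ => 1) ∈ Q₀)
    (hwp : ∀ g : X, ∃! up : X × Q₀,
      (∀ v : X, a up.1 v + (inner ℝ (G (up.2 : Q)) v : ℝ) = (inner ℝ g v : ℝ)) ∧
      (∀ q ∈ Q₀, (inner ℝ (G q) up.1 : ℝ) = 0))
    (f : (Fin 3 → ℝ) → (Fin 3 → ℝ)) (ψ : (Fin 3 → ℝ) → ℝ)
    (u : X) (p : Q) (hp : p ∈ Q₀)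
    (hmom : ∀ v : X, a u v + (inner ℝ (G p) v : ℝ) = (inner ℝ (I f) v : ℝ))
    (hmass : ∀ q ∈ Q₀, (inner ℝ (G q) u : ℝ) = 0) :
    ∃ c : ℝ, (p + J ψ + c • J (fun _ => 1)) ∈ Q₀ ∧
      (∀ v : X, a u v + (inner ℝ (G (p + J ψ + c • J (fun _ => 1))) v : ℝ)
        = (inner ℝ (I (f + fun x => vgrad3 ψ x)) v : ℝ)) ∧
      (∀ q ∈ Q₀, (inner ℝ (G q) u : ℝ) = 0) := by
  have hI0 : I 0 = 0 := by
    have := hIadd 0 0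
    simpa using this
  have hgrad1 : (fun x => vgrad3 (fun _ => (1:ℝ)) x) = (0 : (Fin 3 → ℝ) → (Fin 3 → ℝ)) := by
    funext x i
    simp [vgrad3, pd3, fderiv_const]
  have hGJ1 : G (J (fun _ => 1)) = 0 := by
    rw [← hcomm, hgrad1, hI0]
  obtain ⟨c, hc⟩ := hshift (p + J ψ)
  refine ⟨c, hc, ?_, hmass⟩
  intro v
  have hIf : I (f + fun x => vgrad3 ψ x) = I f + G (J ψ) := by
    rw [hIadd, hcomm]
  rw [hIf]
  have : G (p + J ψ + c • J (fun _ => 1)) = G p + G (J ψ) := by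
    simp [map_add, map_smul, hGJ1]
  rw [this, inner_add_left, inner_add_left]
  have := hmom v
  linarith
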